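/- There exists a constant C > 0 with the following property: for every absolutely continuous u : [-1,0] → ℂ with derivative u' ∈ L²(-1,0), every v ∈ L²(-1,0) and every w ∈ L²(0,1) satisfying u(0) + ∫_{-1}^{0} v(ξ) dξ + ∫_{0}^{1} (1−ξ)·w(ξ) dξ = 0, one has ‖u‖_{L²(-1,0)} ≤ C·( ‖u'‖_{L²(-1,0)} + ‖v‖_{L²(-1,0)} + ‖w‖_{L²(0,1)} ). -/

import Mathlib

open MeasureTheory

noncomputable def L2norm (a b : ℝ) (f : ℝ → ℂ) : ℝ :=
  Real.sqrt (∫ x in a..b, ‖f x‖ ^ 2)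

lemma L1_le_L2 {a b : ℝ} (hab : b - a = 1) {f : ℝ → ℂ}
    (hf : MemLp f 2 (volume.restrict (Set.Ioo a b))) :
    (∫ x in a..b, ‖f x‖) ≤ L2norm a b f := by
  have hab' : a ≤ b := by linarith
  have hres : volume.restrict (Set.Ioo a b) = volume.restrict (Set.Ioc a b) :=
    Measure.restrict_congr_set Ioo_ae_eq_Ioc
  have hμuniv : (volume.restrict (Set.Ioo a b)) Set.univ = 1 := by
    rw [Measure.restrict_apply_univ, Real.volume_Ioo, hab]; norm_num
  have hpq : (2:ℝ).HolderConjugate 2 := Real.HolderConjugate.two_two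
  have h2 : ENNReal.ofReal (2:ℝ) = 2 := by norm_num
  have hf1 : MemLp (fun x => ‖f x‖) (ENNReal.ofReal (2:ℝ)) (volume.restrict (Set.Ioo a b)) := by
    rw [h2]; exact hf.norm
  have hg1 : MemLp (fun _ : ℝ => (1:ℝ)) (ENNReal.ofReal (2:ℝ)) (volume.restrict (Set.Ioo a b)) := by
    rw [h2]; exact memLp_const 1
  have hH := integral_mul_le_Lp_mul_Lq_of_nonneg hpq
    (Filter.Eventually.of_forall fun x => norm_nonneg (f x))
    (Filter.Eventually.of_forall fun _ => zero_le_one) hf1 hg1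
  simp only [mul_one] at hH
  have hone : (∫ _ : ℝ, (1:ℝ) ^ (2:ℝ) ∂(volume.restrict (Set.Ioo a b))) = 1 := by
    simp [integral_const, hμuniv, hab]
  rw [hone, Real.one_rpow, mul_one] at hH
  have hpow : (∫ x, ‖f x‖ ^ (2:ℝ) ∂(volume.restrict (Set.Ioo a b)))
      = ∫ x, ‖f x‖ ^ (2:ℕ) ∂(volume.restrict (Set.Ioo a b)) := by
    refine integral_congr_ae (Filter.Eventually.of_forall fun x => ?_)
    show ‖f x‖ ^ (2:ℝ) = ‖f x‖ ^ (2:ℕ)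
    rw [show (2:ℝ) = ((2:ℕ):ℝ) by norm_num, Real.rpow_natCast]
  rw [hpow] at hH
  have hint : ∀ g : ℝ → ℝ, (∫ x in a..b, g x) = ∫ x, g x ∂(volume.restrict (Set.Ioo a b)) := by
    intro g
    rw [intervalIntegral.integral_of_le hab', hres]
  rw [L2norm, hint, hint]
  calc ∫ x, ‖f x‖ ∂(volume.restrict (Set.Ioo a b))
      ≤ (∫ x, ‖f x‖ ^ (2:ℕ) ∂(volume.restrict (Set.Ioo a b))) ^ ((1:ℝ)/2) := hH
    _ = Real.sqrt (∫ x, ‖f x‖ ^ (2:ℕ) ∂(volume.restrict (Set.Ioo a b))) := by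
        rw [Real.sqrt_eq_rpow]

theorem poincare_inequality_on_range :
    ∃ C : ℝ, 0 < C ∧ ∀ u u' v w : ℝ → ℂ,
      (∀ x ∈ Set.Icc (-1:ℝ) 0, u x = u (-1) + ∫ t in (-1:ℝ)..x, u' t) →
      MemLp u' 2 (volume.restrict (Set.Ioo (-1:ℝ) 0)) →
      MemLp v 2 (volume.restrict (Set.Ioo (-1:ℝ) 0)) →
      MemLp w 2 (volume.restrict (Set.Ioo (0:ℝ) 1)) →
      u 0 + (∫ ξ in (-1:ℝ)..0, v ξ) + (∫ ξ in (0:ℝ)..1, (1 - (ξ : ℂ)) * w ξ) = 0 →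
      L2norm (-1) 0 u ≤ C * (L2norm (-1) 0 u' + L2norm (-1) 0 v + L2norm 0 1 w) := by
  refine ⟨1, one_pos, fun u u' v w hu hu' hv hw hzero => ?_⟩
  haveI i1 : IsFiniteMeasure (volume.restrict (Set.Ioo (-1:ℝ) 0)) :=
    ⟨by rw [Measure.restrict_apply_univ]; exact measure_Ioo_lt_top⟩
  haveI i2 : IsFiniteMeasure (volume.restrict (Set.Ioo (0:ℝ) 1)) :=
    ⟨by rw [Measure.restrict_apply_univ]; exact measure_Ioo_lt_top⟩
  set A := L2norm (-1) 0 u' with hA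
  set B := L2norm (-1) 0 v with hB
  set D := L2norm 0 1 w with hD
  set K := A + B + D with hK
  have hA0 : 0 ≤ A := Real.sqrt_nonneg _
  have hB0 : 0 ≤ B := Real.sqrt_nonneg _
  have hD0 : 0 ≤ D := Real.sqrt_nonneg _
  have hK0 : 0 ≤ K := by positivity
  -- integrability
  have hu'Ioo : IntegrableOn u' (Set.Ioo (-1:ℝ) 0) volume := hu'.integrable one_le_two
  have hu'Ioc : IntegrableOn u' (Set.Ioc (-1:ℝ) 0) volume :=
    (integrableOn_Ioc_iff_integrableOn_Ioo enorm_ne_top).2 hu'Ioo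
  have hu'ii : IntervalIntegrable u' volume (-1) 0 :=
    (intervalIntegrable_iff_integrableOn_Ioc_of_le (by norm_num)).2 hu'Ioc
  have hvIoo : IntegrableOn v (Set.Ioo (-1:ℝ) 0) volume := hv.integrable one_le_two
  have hwIoo : IntegrableOn w (Set.Ioo (0:ℝ) 1) volume := hw.integrable one_le_two
  have hwIoc : IntegrableOn w (Set.Ioc (0:ℝ) 1) volume :=
    (integrableOn_Ioc_iff_integrableOn_Ioo enorm_ne_top).2 hwIoo
  have hwii : IntervalIntegrable w volume 0 1 :=
    (intervalIntegrable_iff_integrableOn_Ioc_of_le (by norm_num)).2 hwIoc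
  -- bound interval L1 norms by L2 norms
  have hu'L1 : (∫ x in (-1:ℝ)..0, ‖u' x‖) ≤ A := L1_le_L2 (by norm_num) hu'
  have hvL1 : (∫ x in (-1:ℝ)..0, ‖v x‖) ≤ B := L1_le_L2 (by norm_num) hv
  have hwL1 : (∫ x in (0:ℝ)..1, ‖w x‖) ≤ D := L1_le_L2 (by norm_num) hw
  -- bound on the w-term
  have hres : volume.restrict (Set.Ioo (0:ℝ) 1) = volume.restrict (Set.Ioc (0:ℝ) 1) :=
    Measure.restrict_congr_set Ioo_ae_eq_Ioc
  have hmulIoc : IntegrableOn (fun ξ : ℝ => (1 - (ξ:ℂ)) * w ξ) (Set.Ioc (0:ℝ) 1) volume := by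
    refine Integrable.mono hwIoc.norm ?_ ?_
    · exact ((continuous_const.sub Complex.continuous_ofReal).aestronglyMeasurable).mul
        (by rw [← hres]; exact hw.1)
    · rw [MeasureTheory.ae_restrict_iff' measurableSet_Ioc]
      refine Filter.Eventually.of_forall fun x hx => ?_
      have h1 : ‖(1 - (x:ℂ))‖ ≤ 1 := by
        rw [show (1 - (x:ℂ)) = ((1 - x : ℝ) : ℂ) by push_cast; ring, Complex.norm_real,
          Real.norm_eq_abs, abs_of_nonneg (by linarith [hx.2] : (0:ℝ) ≤ 1 - x)]
        linarith [hx.1]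
      calc ‖(1 - (x:ℂ)) * w x‖ = ‖(1 - (x:ℂ))‖ * ‖w x‖ := norm_mul _ _
        _ ≤ 1 * ‖w x‖ := by gcongr
        _ = ‖‖w x‖‖ := by rw [one_mul, norm_norm]
  have hmulii : IntervalIntegrable (fun ξ : ℝ => (1 - (ξ:ℂ)) * w ξ) volume 0 1 :=
    (intervalIntegrable_iff_integrableOn_Ioc_of_le (by norm_num)).2 hmulIoc
  have hwterm : ‖∫ ξ in (0:ℝ)..1, (1 - (ξ:ℂ)) * w ξ‖ ≤ D := by
    refine le_trans (intervalIntegral.norm_integral_le_integral_norm (by norm_num)) ?_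
    refine le_trans ?_ hwL1
    refine intervalIntegral.integral_mono_on (by norm_num) hmulii.norm hwii.norm ?_
    intro x hx
    have h1 : ‖(1 - (x:ℂ))‖ ≤ 1 := by
      rw [show (1 - (x:ℂ)) = ((1 - x : ℝ) : ℂ) by push_cast; ring, Complex.norm_real,
        Real.norm_eq_abs, abs_of_nonneg (by linarith [hx.2] : (0:ℝ) ≤ 1 - x)]
      linarith [hx.1]
    calc ‖(1 - (x:ℂ)) * w x‖ = ‖(1 - (x:ℂ))‖ * ‖w x‖ := norm_mul _ _
      _ ≤ 1 * ‖w x‖ := by gcongr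
      _ = ‖w x‖ := one_mul _
  -- bound on u 0
  have hu0 : ‖u 0‖ ≤ B + D := by
    have heq : u 0 = -(∫ ξ in (-1:ℝ)..0, v ξ) - ∫ ξ in (0:ℝ)..1, (1 - (ξ:ℂ)) * w ξ := by
      linear_combination hzero
    rw [heq]
    refine le_trans (norm_sub_le _ _) ?_
    rw [norm_neg]
    have hvterm : ‖∫ ξ in (-1:ℝ)..0, v ξ‖ ≤ B :=
      le_trans (intervalIntegral.norm_integral_le_integral_norm (by norm_num)) hvL1
    exact add_le_add hvterm hwterm
  -- pointwise bound for u on Icc (-1) 0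
  have key : ∀ x ∈ Set.Icc (-1:ℝ) 0, ‖u x‖ ≤ K := by
    intro x hx
    have hii1 : IntervalIntegrable u' volume (-1) x :=
      hu'ii.mono_set (by
        rw [Set.uIcc_of_le hx.1, Set.uIcc_of_le (by norm_num : (-1:ℝ) ≤ 0)]
        exact Set.Icc_subset_Icc le_rfl hx.2)
    have hii2 : IntervalIntegrable u' volume x 0 :=
      hu'ii.mono_set (by
        rw [Set.uIcc_of_le hx.2, Set.uIcc_of_le (by norm_num : (-1:ℝ) ≤ 0)]
        exact Set.Icc_subset_Icc hx.1 le_rfl)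
    have hadd : (∫ t in (-1:ℝ)..x, u' t) + ∫ t in x..(0:ℝ), u' t = ∫ t in (-1:ℝ)..0, u' t :=
      intervalIntegral.integral_add_adjacent_intervals hii1 hii2
    have h0 : u 0 = u (-1) + ∫ t in (-1:ℝ)..0, u' t := hu 0 ⟨by norm_num, le_refl 0⟩
    have hux : u x = u 0 - ∫ t in x..(0:ℝ), u' t := by
      rw [hu x hx, h0, ← hadd]; ring
    rw [hux]
    have htail : ‖∫ t in x..(0:ℝ), u' t‖ ≤ A := by
      refine le_trans (intervalIntegral.norm_integral_le_integral_norm hx.2) ?_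
      refine le_trans ?_ hu'L1
      exact intervalIntegral.integral_mono_interval hx.1 hx.2 le_rfl
        (Filter.Eventually.of_forall fun t => norm_nonneg _) hu'ii.norm
    calc ‖u 0 - ∫ t in x..(0:ℝ), u' t‖ ≤ ‖u 0‖ + ‖∫ t in x..(0:ℝ), u' t‖ := norm_sub_le _ _
      _ ≤ (B + D) + A := add_le_add hu0 htail
      _ = K := by rw [hK]; ring
  -- continuity of the primitive representation
  set g : ℝ → ℂ := fun x => u (-1) + ∫ t in (-1:ℝ)..x, u' t with hg
  have hu'Icc : IntegrableOn u' (Set.uIcc (-1:ℝ) 0) volume := by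
    rw [Set.uIcc_of_le (by norm_num : (-1:ℝ) ≤ 0)]
    exact (integrableOn_Icc_iff_integrableOn_Ioo enorm_ne_top enorm_ne_top).2 hu'Ioo
  have hgc : ContinuousOn g (Set.uIcc (-1:ℝ) 0) :=
    continuousOn_const.add (intervalIntegral.continuousOn_primitive_interval hu'Icc)
  have hgint : IntervalIntegrable (fun x => ‖g x‖ ^ 2) volume (-1) 0 :=
    ((hgc.norm).pow 2).intervalIntegrable
  have hcongr : (∫ x in (-1:ℝ)..0, ‖u x‖ ^ 2) = ∫ x in (-1:ℝ)..0, ‖g x‖ ^ 2 := by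
    refine intervalIntegral.integral_congr fun x hx => ?_
    rw [hu x (by rwa [Set.uIcc_of_le (by norm_num : (-1:ℝ) ≤ 0)] at hx)]
  have hmono : (∫ x in (-1:ℝ)..0, ‖g x‖ ^ 2) ≤ ∫ _ in (-1:ℝ)..0, K ^ 2 := by
    refine intervalIntegral.integral_mono_on (by norm_num) hgint intervalIntegrable_const ?_
    intro x hx
    have : ‖g x‖ = ‖u x‖ := by rw [hu x hx]
    rw [this]
    exact pow_le_pow_left₀ (norm_nonneg _) (key x hx) 2
  have hconst : (∫ _ in (-1:ℝ)..0, K ^ 2) = K ^ 2 := by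
    rw [intervalIntegral.integral_const]; norm_num
  have : L2norm (-1) 0 u ≤ K := by
    rw [L2norm]
    calc Real.sqrt (∫ x in (-1:ℝ)..0, ‖u x‖ ^ 2)
        ≤ Real.sqrt (K ^ 2) := Real.sqrt_le_sqrt (by rw [hcongr]; exact hmono.trans (le_of_eq hconst))
      _ = K := Real.sqrt_sq hK0
  rw [one_mul]
  exact this
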